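/- If the diagonal matrix case applies, i.e., X ≻ 0 is diagonal with W = X^{-1}, then the minimizer of the ℓ1-regularized quadratic model Δ ↦ tr((S − W)^T Δ) + (1/2)tr(WΔWΔ) + ‖X + Δ‖_{1,Λ} over symmetric Δ is given entrywise by D_{ij} = S(−S_{ij}/(W_{ii}W_{jj}), λ_{ij}/(W_{ii}W_{jj})) for i ≠ j, and D_{ii} = −X_{ii} + S(X_{ii} − (S_{ii} − W_{ii})/W_{ii}², λ_{ii}/W_{ii}²), where S(·,·) is soft-thresholding. -/

import Mathlib

open Matrix BigOperators

/-- The soft-thresholding operator `S(z, r) = sign(z) · max(|z| − r, 0)`. -/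
noncomputable def softThreshold (z r : ℝ) : ℝ := Real.sign z * max (|z| - r) 0

/-- Weighted elementwise ℓ1 norm `‖X‖_{1,Λ} = Σᵢⱼ Λᵢⱼ|Xᵢⱼ|`. -/
noncomputable def norm1 {p : ℕ} (Λ X : Matrix (Fin p) (Fin p) ℝ) : ℝ :=
  ∑ i, ∑ j, Λ i j * |X i j|

/-- If `X ≻ 0` is diagonal and `W = X⁻¹`, then the matrix `D` given
entrywise by `D_{ij} = S(−S_{ij}/(W_{ii}W_{jj}), λ_{ij}/(W_{ii}W_{jj}))` for `i ≠ j` and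
`D_{ii} = −X_{ii} + S(X_{ii} − (S_{ii} − W_{ii})/W_{ii}², λ_{ii}/W_{ii}²)`
minimizes the ℓ1-regularized quadratic model
`Δ ↦ tr((S−W)ᵀΔ) + ½ tr(WΔWΔ) + ‖X+Δ‖_{1,Λ}` over symmetric `Δ`. -/
lemma soft_eq (z r : ℝ) (hr : 0 ≤ r) :
    softThreshold z r = if r < z then z - r else if z < -r then z + r else 0 := by
  unfold softThreshold
  rcases lt_trichotomy z 0 with hz | hz | hz
  · rw [Real.sign_of_neg hz, abs_of_neg hz]
    rcases lt_or_ge z (-r) with h | h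
    · rw [if_neg (by linarith), if_pos h, max_eq_left (by linarith)]; ring
    · rw [if_neg (by linarith), if_neg (not_lt.2 h), max_eq_right (by linarith), mul_zero]
  · simp [hz, hr.not_gt, not_lt.2 (neg_nonpos.mpr hr)]
  · rw [Real.sign_of_pos hz, abs_of_pos hz, one_mul]
    rcases lt_or_ge r z with h | h
    · rw [if_pos h, max_eq_left (by linarith)]
    · rw [if_neg (not_lt.2 h), if_neg (by linarith), max_eq_right (by linarith)]

lemma soft_close (z r : ℝ) (hr : 0 ≤ r) : |softThreshold z r - z| ≤ r := by
  rw [soft_eq z r hr]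
  split_ifs with h1 h2 <;> rw [abs_le] <;> constructor <;> simp at * <;> linarith

lemma soft_prod (z r : ℝ) (hr : 0 ≤ r) :
    (softThreshold z r - z) * softThreshold z r = -r * |softThreshold z r| := by
  rw [soft_eq z r hr]
  split_ifs with h1 h2
  · rw [abs_of_pos (by linarith)]; ring
  · rw [abs_of_neg (by linarith)]; ring
  · simp

lemma scalar_min (a b c x0 t0 t : ℝ) (ha : 0 < a) (hc : 0 ≤ c)
    (ht0 : t0 = -x0 + softThreshold (x0 - b / a) (c / a)) :
    b * t0 + a / 2 * t0 ^ 2 + c * |x0 + t0| ≤ b * t + a / 2 * t ^ 2 + c * |x0 + t| := by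
  set z := x0 - b / a with hz
  set r := c / a with hrr
  have hr : 0 ≤ r := div_nonneg hc ha.le
  set u := softThreshold z r with hu
  set v := x0 + t with hv
  have h1 : |u - z| ≤ r := soft_close z r hr
  have h2 : (u - z) * u = -r * |u| := soft_prod z r hr
  have hb : b = a * (x0 - z) := by rw [hz]; field_simp; ring
  have hx0t0 : x0 + t0 = u := by rw [ht0]; ring
  have hgu : a * ((u - z) * u) = -(c * |u|) := by
    rw [h2, hrr]; field_simp
  have hgv : -(c * |v|) ≤ a * (u - z) * v := by
    have hle : |a * (u - z) * v| ≤ c * |v| := by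
      rw [abs_mul, abs_mul, abs_of_pos ha]
      have h3 : a * |u - z| ≤ c := by
        calc a * |u - z| ≤ a * r := by nlinarith
          _ = c := by rw [hrr]; field_simp
      nlinarith [abs_nonneg v]
    linarith [neg_abs_le (a * (u - z) * v)]
  rw [hx0t0]
  have htv : t = v - x0 := by rw [hv]; ring
  have hkey : b * t + a / 2 * t ^ 2 + c * |v| - (b * t0 + a / 2 * t0 ^ 2 + c * |u|) =
      a / 2 * (v - u) ^ 2 + (a * (u - z) * v + c * |v|) +
        (-(a * ((u - z) * u)) - c * |u|) := by
    rw [htv, ht0, hb]; ring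
  clear_value z r u v
  linarith [hkey, hgu, hgv, mul_nonneg (by linarith : (0:ℝ) ≤ a / 2) (sq_nonneg (v - u))]

lemma obj_eq {p : ℕ} (A : Matrix (Fin p) (Fin p) ℝ) (w : Fin p → ℝ)
    (Λ X Δ : Matrix (Fin p) (Fin p) ℝ) (hΔ : Δ.IsSymm) :
    Matrix.trace (Aᵀ * Δ) + (1 / 2) * Matrix.trace
        (Matrix.diagonal w * Δ * Matrix.diagonal w * Δ) + norm1 Λ (X + Δ)
      = ∑ i, ∑ j, (A i j * Δ i j + w i * w j / 2 * (Δ i j) ^ 2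
          + Λ i j * |X i j + Δ i j|) := by
  have h1 : Matrix.trace (Aᵀ * Δ) = ∑ i, ∑ j, A i j * Δ i j := by
    simp only [Matrix.trace, Matrix.diag_apply, Matrix.mul_apply, Matrix.transpose_apply]
    rw [Finset.sum_comm]
  have h2 : Matrix.trace (Matrix.diagonal w * Δ * Matrix.diagonal w * Δ)
      = ∑ i, ∑ j, w i * w j * (Δ i j) ^ 2 := by
    have hM : Matrix.diagonal w * Δ = Matrix.of fun i j => w i * Δ i j := by
      ext i j; simp [Matrix.mul_apply, Matrix.diagonal]
    rw [Matrix.mul_assoc (Matrix.diagonal w * Δ), hM]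
    simp only [Matrix.trace, Matrix.diag_apply, Matrix.mul_apply, Matrix.of_apply]
    refine Finset.sum_congr rfl fun i _ => Finset.sum_congr rfl fun j _ => ?_
    rw [hΔ.apply i j]
    ring
  rw [h1, h2, norm1, Finset.mul_sum, ← Finset.sum_add_distrib, ← Finset.sum_add_distrib]
  refine Finset.sum_congr rfl fun i _ => ?_
  rw [Finset.mul_sum, ← Finset.sum_add_distrib, ← Finset.sum_add_distrib]
  refine Finset.sum_congr rfl fun j _ => ?_
  simp only [Matrix.add_apply]; ring


theorem diagonal_newton_direction_closed_form {p : ℕ}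
    (S Λ X W D : Matrix (Fin p) (Fin p) ℝ)
    (hX : X.PosDef) (hXdiag : ∀ i j, i ≠ j → X i j = 0) (hW : W = X⁻¹)
    (hSs : S.IsSymm) (hΛs : Λ.IsSymm) (hΛ : ∀ i j, 0 ≤ Λ i j)
    (hDdef : ∀ i j, D i j =
      if i = j then
        -X i i + softThreshold (X i i - (S i i - W i i) / (W i i) ^ 2) (Λ i i / (W i i) ^ 2)
      else softThreshold (-(S i j) / (W i i * W j j)) (Λ i j / (W i i * W j j))) :
    ∀ Δ : Matrix (Fin p) (Fin p) ℝ, Δ.IsSymm →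
      Matrix.trace ((S - W)ᵀ * D) + (1 / 2) * Matrix.trace (W * D * W * D)
          + norm1 Λ (X + D) ≤
        Matrix.trace ((S - W)ᵀ * Δ) + (1 / 2) * Matrix.trace (W * Δ * W * Δ)
          + norm1 Λ (X + Δ) := by
  intro Δ hΔ
  set d : Fin p → ℝ := fun i => X i i with hd
  have hXd : X = Matrix.diagonal d := by
    ext i j
    by_cases h : i = j
    · subst h; simp [Matrix.diagonal, hd]
    · simp [Matrix.diagonal, h, hXdiag i j h]
  have hdpos : ∀ i, 0 < d i := Matrix.posDef_diagonal_iff.mp (hXd ▸ hX)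
  set w : Fin p → ℝ := fun i => (d i)⁻¹ with hw
  have hwpos : ∀ i, 0 < w i := fun i => inv_pos.mpr (hdpos i)
  have hWd : W = Matrix.diagonal w := by
    rw [hW, hXd]
    refine Matrix.inv_eq_right_inv ?_
    rw [Matrix.diagonal_mul_diagonal]
    convert Matrix.diagonal_one using 2
    ext i
    exact mul_inv_cancel₀ (hdpos i).ne'
  have hWap : ∀ i, W i i = w i := fun i => by rw [hWd]; simp
  have hDsymm : D.IsSymm := by
    rw [Matrix.IsSymm]
    ext i j
    rw [Matrix.transpose_apply, hDdef i j, hDdef j i]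
    by_cases h : i = j
    · subst h; rfl
    · rw [if_neg h, if_neg (Ne.symm h), hSs.apply i j, hΛs.apply i j, mul_comm (W i i)]
  rw [hWd, obj_eq (S - Matrix.diagonal w) w Λ X Δ hΔ,
    obj_eq (S - Matrix.diagonal w) w Λ X D hDsymm]
  refine Finset.sum_le_sum fun i _ => Finset.sum_le_sum fun j _ => ?_
  have ha : 0 < w i * w j := mul_pos (hwpos i) (hwpos j)
  refine scalar_min (w i * w j) ((S - Matrix.diagonal w) i j) (Λ i j) (X i j) (D i j) (Δ i j)
    ha (hΛ i j) ?_
  rw [hDdef i j, Matrix.sub_apply]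
  by_cases h : i = j
  · subst h
    rw [if_pos rfl, hWap i, sq, Matrix.diagonal_apply_eq]
  · rw [if_neg h, hWap i, hWap j, hXdiag i j h, Matrix.diagonal_apply_ne w h]
    ring_nf
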